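/- Let k be a field of characteristic p > 0 and let V = span_k{1, β + β², β^{2p+1}} + (β^{6p+1}) ⊆ k[β]. Then every k-derivation of the algebra A = T / I(6p+1; 6p+1, 6p+1; V) is inner, i.e. HH¹(A) = 0. -/

import Mathlib

open Polynomial Matrix

noncomputable section

/-- `Algebra` structure on the quotient of a `k`-algebra by a ring congruence. -/
instance RingConQuotient.algebra (k R : Type*) [CommSemiring k] [Ring R] [Algebra k R]
    (c : RingCon R) : Algebra k c.Quotient where
  algebraMap := (RingCon.mk' c).comp (algebraMap k R)
  commutes' := by
    intro r x
    induction x using Quotient.ind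
    exact congrArg _ (Algebra.commutes r _)
  smul_def' := by
    intro r x
    induction x using Quotient.ind
    exact congrArg _ (Algebra.smul_def r _)

variable (k : Type*) [Field k]

/-- `D` is a `k`-derivation (as a linear endomorphism of a `k`-algebra). -/
def IsDer {R : Type*} [Ring R] [Algebra k R] (D : R →ₗ[k] R) : Prop :=
  ∀ x y : R, D (x * y) = D x * y + x * D y

/-- `D` is an inner derivation. -/
def IsInner {R : Type*} [Ring R] [Algebra k R] (D : R →ₗ[k] R) : Prop :=
  ∃ a : R, ∀ x : R, D x = a * x - x * a

/-- The ideal `(β^j)` of `k[β]`, as a `k`-submodule. -/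
def Bsub (j : ℕ) : Submodule k (Polynomial k) where
  carrier := {p | X ^ j ∣ p}
  zero_mem' := dvd_zero _
  add_mem' := fun h1 h2 => dvd_add h1 h2
  smul_mem' := fun c p hp => by
    simpa [Polynomial.smul_eq_C_mul] using Dvd.dvd.mul_left hp (C c)

lemma mem_Bsub {k : Type*} [Field k] {j : ℕ} {p : Polynomial k} :
    p ∈ Bsub k j ↔ X ^ j ∣ p := Iff.rfl

/-- The algebra `T`: upper triangular 3×3 matrices over `k[β]` whose
`(1,1)` and `(3,3)` entries are constants. -/
def Tsub : Subalgebra k (Matrix (Fin 3) (Fin 3) (Polynomial k)) where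
  carrier := {M | (∀ i j : Fin 3, j < i → M i j = 0) ∧
      (∃ x : k, M 0 0 = C x) ∧ (∃ z : k, M 2 2 = C z)}
  zero_mem' := ⟨fun _ _ _ => rfl, ⟨0, by simp⟩, ⟨0, by simp⟩⟩
  one_mem' := ⟨fun i j h => Matrix.one_apply_ne h.ne', ⟨1, by simp⟩, ⟨1, by simp⟩⟩
  add_mem' := by
    rintro a b ⟨hal, ⟨x, hax⟩, ⟨z, haz⟩⟩ ⟨hbl, ⟨y, hby⟩, ⟨w, hbw⟩⟩
    refine ⟨fun i j h => by simp [hal i j h, hbl i j h], ⟨x + y, by simp [hax, hby]⟩,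
      ⟨z + w, by simp [haz, hbw]⟩⟩
  mul_mem' := by
    rintro a b ⟨hal, ⟨x, hax⟩, ⟨z, haz⟩⟩ ⟨hbl, ⟨y, hby⟩, ⟨w, hbw⟩⟩
    refine ⟨fun i j h => ?_, ⟨x * y, ?_⟩, ⟨z * w, ?_⟩⟩
    · rw [Matrix.mul_apply]
      apply Finset.sum_eq_zero
      intro l _
      rcases lt_or_ge l i with hl | hl
      · rw [hal i l hl, zero_mul]
      · rw [hbl l j (lt_of_lt_of_le h hl), mul_zero]
    · rw [Matrix.mul_apply, Fin.sum_univ_three,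
        hbl 1 0 (by decide), hbl 2 0 (by decide), hax, hby]
      simp
    · rw [Matrix.mul_apply, Fin.sum_univ_three,
        hal 2 0 (by decide), hal 2 1 (by decide), haz, hbw]
      simp
  algebraMap_mem' := by
    intro r
    refine ⟨fun i j h => ?_, ⟨r, ?_⟩, ⟨r, ?_⟩⟩
    · rw [Matrix.algebraMap_matrix_apply, if_neg h.ne']
    · rw [Matrix.algebraMap_matrix_apply, if_pos rfl]; rfl
    · rw [Matrix.algebraMap_matrix_apply, if_pos rfl]; rfl

/-- The matrix `p·E₁₂` as an element of `T`. -/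
def tE12 (p : Polynomial k) : Tsub k :=
  ⟨Matrix.single 0 1 p, by
    refine ⟨fun i j h => ?_, ⟨0, ?_⟩, ⟨0, ?_⟩⟩
    · fin_cases i <;> fin_cases j <;> simp_all [Matrix.single, Matrix.of_apply]
    · simp [Matrix.single, Matrix.of_apply]
    · simp [Matrix.single, Matrix.of_apply]⟩

/-- The matrix `p·E₂₂` as an element of `T`. -/
def tE22 (p : Polynomial k) : Tsub k :=
  ⟨Matrix.single 1 1 p, by
    refine ⟨fun i j h => ?_, ⟨0, ?_⟩, ⟨0, ?_⟩⟩
    · fin_cases i <;> fin_cases j <;> simp_all [Matrix.single, Matrix.of_apply]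
    · simp [Matrix.single, Matrix.of_apply]
    · simp [Matrix.single, Matrix.of_apply]⟩

/-- The matrix `p·E₂₃` as an element of `T`. -/
def tE23 (p : Polynomial k) : Tsub k :=
  ⟨Matrix.single 1 2 p, by
    refine ⟨fun i j h => ?_, ⟨0, ?_⟩, ⟨0, ?_⟩⟩
    · fin_cases i <;> fin_cases j <;> simp_all [Matrix.single, Matrix.of_apply]
    · simp [Matrix.single, Matrix.of_apply]
    · simp [Matrix.single, Matrix.of_apply]⟩

/-- The matrix `p·E₁₃` as an element of `T`. -/
def tE13 (p : Polynomial k) : Tsub k :=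
  ⟨Matrix.single 0 2 p, by
    refine ⟨fun i j h => ?_, ⟨0, ?_⟩, ⟨0, ?_⟩⟩
    · fin_cases i <;> fin_cases j <;> simp_all [Matrix.single, Matrix.of_apply]
    · simp [Matrix.single, Matrix.of_apply]
    · simp [Matrix.single, Matrix.of_apply]⟩

/-- The idempotent `E₁₁` as an element of `T`. -/
def tE11 : Tsub k :=
  ⟨Matrix.single 0 0 1, by
    refine ⟨fun i j h => ?_, ⟨1, ?_⟩, ⟨0, ?_⟩⟩
    · fin_cases i <;> fin_cases j <;> simp_all [Matrix.single, Matrix.of_apply]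
    · simp [Matrix.single, Matrix.of_apply]
    · simp [Matrix.single, Matrix.of_apply]⟩

/-- The idempotent `E₂₂` as an element of `T`. -/
def tE22one : Tsub k := tE22 k 1

/-- The idempotent `E₃₃` as an element of `T`. -/
def tE33 : Tsub k :=
  ⟨Matrix.single 2 2 1, by
    refine ⟨fun i j h => ?_, ⟨0, ?_⟩, ⟨1, ?_⟩⟩
    · fin_cases i <;> fin_cases j <;> simp_all [Matrix.single, Matrix.of_apply]
    · simp [Matrix.single, Matrix.of_apply]
    · simp [Matrix.single, Matrix.of_apply]⟩

/-- The underlying set of the ideal `I(n; n', n''; V)` of `T`. -/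
def Icar (n n' n'' : ℕ) (V : Submodule k (Polynomial k)) : Set (Tsub k) :=
  {M | (M : Matrix (Fin 3) (Fin 3) (Polynomial k)) 0 0 = 0 ∧
       (M : Matrix (Fin 3) (Fin 3) (Polynomial k)) 2 2 = 0 ∧
       X ^ n' ∣ (M : Matrix (Fin 3) (Fin 3) (Polynomial k)) 0 1 ∧
       (M : Matrix (Fin 3) (Fin 3) (Polynomial k)) 0 2 ∈ V ∧
       X ^ n ∣ (M : Matrix (Fin 3) (Fin 3) (Polynomial k)) 1 1 ∧
       X ^ n'' ∣ (M : Matrix (Fin 3) (Fin 3) (Polynomial k)) 1 2}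

variable {k}

lemma Tsub_lower {a : Tsub k} :
    ∀ i j : Fin 3, j < i → (a : Matrix (Fin 3) (Fin 3) (Polynomial k)) i j = 0 := a.2.1

lemma Tsub_00 (a : Tsub k) : ∃ x : k, (a : Matrix (Fin 3) (Fin 3) (Polynomial k)) 0 0 = C x :=
  a.2.2.1

lemma Tsub_22 (a : Tsub k) : ∃ z : k, (a : Matrix (Fin 3) (Fin 3) (Polynomial k)) 2 2 = C z :=
  a.2.2.2

variable (k)

/-- The two-sided ideal `I(n; n', n''; V)` of `T`. -/
def Itsi (n n' n'' : ℕ) (V : Submodule k (Polynomial k)) (hn' : n' ≤ n) (hn'' : n'' ≤ n)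
    (hV : ∀ p : Polynomial k, X ^ min n' n'' ∣ p → p ∈ V) : TwoSidedIdeal (Tsub k) :=
  TwoSidedIdeal.mk' (Icar k n n' n'' V)
    (by
      refine ⟨rfl, rfl, ?_, ?_, ?_, ?_⟩ <;> simp)
    (by
      rintro a b ⟨h1, h2, h3, h4, h5, h6⟩ ⟨g1, g2, g3, g4, g5, g6⟩
      refine ⟨?_, ?_, ?_, ?_, ?_, ?_⟩ <;>
        simp only [AddMemClass.coe_add, Matrix.add_apply]
      · rw [h1, g1, add_zero]
      · rw [h2, g2, add_zero]
      · exact dvd_add h3 g3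
      · exact V.add_mem h4 g4
      · exact dvd_add h5 g5
      · exact dvd_add h6 g6)
    (by
      rintro a ⟨h1, h2, h3, h4, h5, h6⟩
      refine ⟨?_, ?_, ?_, ?_, ?_, ?_⟩ <;>
        simp only [NegMemClass.coe_neg, Matrix.neg_apply]
      · rw [h1, neg_zero]
      · rw [h2, neg_zero]
      · exact dvd_neg.mpr h3
      · exact V.neg_mem h4
      · exact dvd_neg.mpr h5
      · exact dvd_neg.mpr h6)
    (by
      rintro t a ⟨h1, h2, h3, h4, h5, h6⟩
      have hta : ((t * a : Tsub k) : Matrix (Fin 3) (Fin 3) (Polynomial k)) =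
          (t : Matrix (Fin 3) (Fin 3) (Polynomial k)) * a := rfl
      obtain ⟨x, hx⟩ := Tsub_00 t
      refine ⟨?_, ?_, ?_, ?_, ?_, ?_⟩ <;>
        rw [hta, Matrix.mul_apply, Fin.sum_univ_three]
      · rw [h1, Tsub_lower (a := a) 1 0 (by decide), Tsub_lower (a := a) 2 0 (by decide)]
        simp
      · rw [h2, Tsub_lower (a := t) 2 0 (by decide), Tsub_lower (a := t) 2 1 (by decide)]
        simp
      · rw [Tsub_lower (a := a) 2 1 (by decide)]
        simp only [mul_zero, add_zero]
        exact dvd_add (Dvd.dvd.mul_left h3 _)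
          (Dvd.dvd.mul_left ((pow_dvd_pow X hn').trans h5) _)
      · rw [h2]
        simp only [mul_zero, add_zero]
        refine V.add_mem ?_
          (hV _ (Dvd.dvd.mul_left ((pow_dvd_pow X (min_le_right n' n'')).trans h6) _))
        rw [hx]
        have : C x * (a : Matrix (Fin 3) (Fin 3) (Polynomial k)) 0 2 =
            x • (a : Matrix (Fin 3) (Fin 3) (Polynomial k)) 0 2 := by
          rw [Polynomial.smul_eq_C_mul]
        rw [this]
        exact V.smul_mem _ h4
      · rw [Tsub_lower (a := t) 1 0 (by decide), Tsub_lower (a := a) 2 1 (by decide)]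
        simp only [zero_mul, mul_zero, zero_add, add_zero]
        exact Dvd.dvd.mul_left h5 _
      · rw [Tsub_lower (a := t) 1 0 (by decide), h2]
        simp only [zero_mul, mul_zero, zero_add, add_zero]
        exact Dvd.dvd.mul_left h6 _)
    (by
      rintro a t ⟨h1, h2, h3, h4, h5, h6⟩
      have hta : ((a * t : Tsub k) : Matrix (Fin 3) (Fin 3) (Polynomial k)) =
          (a : Matrix (Fin 3) (Fin 3) (Polynomial k)) * t := rfl
      obtain ⟨z, hz⟩ := Tsub_22 t
      refine ⟨?_, ?_, ?_, ?_, ?_, ?_⟩ <;>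
        rw [hta, Matrix.mul_apply, Fin.sum_univ_three]
      · rw [h1, Tsub_lower (a := t) 1 0 (by decide), Tsub_lower (a := t) 2 0 (by decide)]
        simp
      · rw [h2, Tsub_lower (a := a) 2 0 (by decide), Tsub_lower (a := a) 2 1 (by decide)]
        simp
      · rw [h1, Tsub_lower (a := t) 2 1 (by decide)]
        simp only [zero_mul, mul_zero, zero_add, add_zero]
        exact Dvd.dvd.mul_right h3 _
      · rw [h1]
        simp only [zero_mul, zero_add]
        refine V.add_mem
          (hV _ (Dvd.dvd.mul_right ((pow_dvd_pow X (min_le_left n' n'')).trans h3) _)) ?_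
        rw [hz]
        have : (a : Matrix (Fin 3) (Fin 3) (Polynomial k)) 0 2 * C z =
            z • (a : Matrix (Fin 3) (Fin 3) (Polynomial k)) 0 2 := by
          rw [Polynomial.smul_eq_C_mul, mul_comm]
        rw [this]
        exact V.smul_mem _ h4
      · rw [Tsub_lower (a := a) 1 0 (by decide), Tsub_lower (a := t) 2 1 (by decide)]
        simp only [zero_mul, mul_zero, zero_add, add_zero]
        exact Dvd.dvd.mul_right h5 _
      · rw [Tsub_lower (a := a) 1 0 (by decide)]
        simp only [zero_mul, zero_add]
        exact dvd_add (Dvd.dvd.mul_right ((pow_dvd_pow X hn'').trans h5) _)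
          (Dvd.dvd.mul_right h6 _))

/-- The quotient algebra `A = T / I(n; n', n''; V)`. -/
def Aquot (n n' n'' : ℕ) (V : Submodule k (Polynomial k)) (hn' : n' ≤ n) (hn'' : n'' ≤ n)
    (hV : ∀ p : Polynomial k, X ^ min n' n'' ∣ p → p ∈ V) : Type _ :=
  (Itsi k n n' n'' V hn' hn'' hV).ringCon.Quotient

instance (n n' n'' : ℕ) (V : Submodule k (Polynomial k)) (hn' : n' ≤ n) (hn'' : n'' ≤ n)
    (hV : ∀ p : Polynomial k, X ^ min n' n'' ∣ p → p ∈ V) :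
    Ring (Aquot k n n' n'' V hn' hn'' hV) :=
  inferInstanceAs (Ring (Itsi k n n' n'' V hn' hn'' hV).ringCon.Quotient)

instance (n n' n'' : ℕ) (V : Submodule k (Polynomial k)) (hn' : n' ≤ n) (hn'' : n'' ≤ n)
    (hV : ∀ p : Polynomial k, X ^ min n' n'' ∣ p → p ∈ V) :
    Algebra k (Aquot k n n' n'' V hn' hn'' hV) :=
  inferInstanceAs (Algebra k (Itsi k n n' n'' V hn' hn'' hV).ringCon.Quotient)

/-- The quotient map `T → A`. -/
def Amk (n n' n'' : ℕ) (V : Submodule k (Polynomial k)) (hn' : n' ≤ n) (hn'' : n'' ≤ n)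
    (hV : ∀ p : Polynomial k, X ^ min n' n'' ∣ p → p ∈ V) :
    Tsub k →+* Aquot k n n' n'' V hn' hn'' hV :=
  RingCon.mk' (Itsi k n n' n'' V hn' hn'' hV).ringCon


/-- The subspace `V = span{1, β + β², β^{2p+1}} + (β^{6p+1})` of `k[β]`. -/
def V19 (p : ℕ) : Submodule k (Polynomial k) :=
  Submodule.span k {(1 : Polynomial k), X + X ^ 2, X ^ (2 * p + 1)} ⊔ Bsub k (6 * p + 1)

lemma hV19 (p : ℕ) :
    ∀ q : Polynomial k, X ^ min (6 * p + 1) (6 * p + 1) ∣ q → q ∈ V19 k p := by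
  intro q hq
  rw [min_self] at hq
  exact Submodule.mem_sup_right hq

namespace Stmt19

variable {k : Type*} [Field k]

/-- The algebra of statement 19. -/
abbrev AA (k : Type*) [Field k] (p : ℕ) :=
  Aquot k (6*p+1) (6*p+1) (6*p+1) (V19 k p) le_rfl le_rfl (hV19 k p)

/-- The projection. -/
noncomputable def pr (k : Type*) [Field k] (p : ℕ) : Tsub k →+* AA k p :=
  Amk k (6*p+1) (6*p+1) (6*p+1) (V19 k p) le_rfl le_rfl (hV19 k p)

variable {p : ℕ}

lemma pr_surj : Function.Surjective (pr k p) :=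
  fun y => Quotient.inductionOn' y (fun t => ⟨t, rfl⟩)

lemma pr_smul (r : k) (t : Tsub k) : pr k p (r • t) = r • pr k p t := by
  rw [Algebra.smul_def, Algebra.smul_def, _root_.map_mul]
  rfl

lemma pr_eq_zero_iff (t : Tsub k) :
    pr k p t = 0 ↔ t ∈ Icar k (6*p+1) (6*p+1) (6*p+1) (V19 k p) := by
  rw [show (0 : AA k p) = pr k p 0 from (map_zero _).symm]
  rw [show (pr k p t = pr k p 0) ↔
      (Itsi k (6*p+1) (6*p+1) (6*p+1) (V19 k p) le_rfl le_rfl (hV19 k p)).ringCon t 0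
    from RingCon.eq _]
  rw [TwoSidedIdeal.rel_iff, sub_zero]
  exact TwoSidedIdeal.mem_mk' _ _ _ _ _ _ _

lemma pr_tE12_eq_zero (q : Polynomial k) :
    pr k p (tE12 k q) = 0 ↔ X^(6*p+1) ∣ q := by
  rw [pr_eq_zero_iff]
  simp [Icar, tE12, Matrix.single, Matrix.of_apply]

lemma pr_tE22_eq_zero (q : Polynomial k) :
    pr k p (tE22 k q) = 0 ↔ X^(6*p+1) ∣ q := by
  rw [pr_eq_zero_iff]
  simp [Icar, tE22, Matrix.single, Matrix.of_apply]

lemma pr_tE23_eq_zero (q : Polynomial k) :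
    pr k p (tE23 k q) = 0 ↔ X^(6*p+1) ∣ q := by
  rw [pr_eq_zero_iff]
  simp [Icar, tE23, Matrix.single, Matrix.of_apply]

lemma pr_tE13_eq_zero (q : Polynomial k) :
    pr k p (tE13 k q) = 0 ↔ q ∈ V19 k p := by
  rw [pr_eq_zero_iff]
  simp [Icar, tE13, Matrix.single, Matrix.of_apply]


section Tlemmas
variable (q r : Polynomial k)

lemma tE12_zero : tE12 k 0 = 0 := Subtype.ext (Matrix.single_zero _ _)
lemma tE22_zero : tE22 k 0 = 0 := Subtype.ext (Matrix.single_zero _ _)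
lemma tE23_zero : tE23 k 0 = 0 := Subtype.ext (Matrix.single_zero _ _)
lemma tE13_zero : tE13 k 0 = 0 := Subtype.ext (Matrix.single_zero _ _)

lemma tE12_add : tE12 k (q + r) = tE12 k q + tE12 k r :=
  Subtype.ext (Matrix.single_add _ _ _ _)
lemma tE22_add : tE22 k (q + r) = tE22 k q + tE22 k r :=
  Subtype.ext (Matrix.single_add _ _ _ _)
lemma tE23_add : tE23 k (q + r) = tE23 k q + tE23 k r :=
  Subtype.ext (Matrix.single_add _ _ _ _)
lemma tE13_add : tE13 k (q + r) = tE13 k q + tE13 k r :=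
  Subtype.ext (Matrix.single_add _ _ _ _)

lemma tE12_smul (x : k) : tE12 k (x • q) = x • tE12 k q :=
  Subtype.ext (Matrix.smul_single _ _ _ _).symm
lemma tE22_smul (x : k) : tE22 k (x • q) = x • tE22 k q :=
  Subtype.ext (Matrix.smul_single _ _ _ _).symm
lemma tE23_smul (x : k) : tE23 k (x • q) = x • tE23 k q :=
  Subtype.ext (Matrix.smul_single _ _ _ _).symm

lemma tE12_neg : tE12 k (-q) = -(tE12 k q) := by
  apply eq_neg_of_add_eq_zero_left
  rw [← tE12_add, neg_add_cancel, tE12_zero]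
lemma tE23_neg : tE23 k (-q) = -(tE23 k q) := by
  apply eq_neg_of_add_eq_zero_left
  rw [← tE23_add, neg_add_cancel, tE23_zero]

-- products
lemma tE12_mul_tE22 : tE12 k q * tE22 k r = tE12 k (q * r) :=
  Subtype.ext (Matrix.single_mul_single_same _ _ _ _ _)
lemma tE22_mul_tE22 : tE22 k q * tE22 k r = tE22 k (q * r) :=
  Subtype.ext (Matrix.single_mul_single_same _ _ _ _ _)
lemma tE22_mul_tE23 : tE22 k q * tE23 k r = tE23 k (q * r) :=
  Subtype.ext (Matrix.single_mul_single_same _ _ _ _ _)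
lemma tE12_mul_tE23 : tE12 k q * tE23 k r = tE13 k (q * r) :=
  Subtype.ext (Matrix.single_mul_single_same _ _ _ _ _)
lemma tE11_mul_tE12 : tE11 k * tE12 k q = tE12 k q := by
  have : tE11 k * tE12 k q = tE12 k (1 * q) :=
    Subtype.ext (Matrix.single_mul_single_same _ _ _ _ _)
  rw [this, one_mul]
lemma tE23_mul_tE33 : tE23 k q * tE33 k = tE23 k q := by
  have : tE23 k q * tE33 k = tE23 k (q * 1) :=
    Subtype.ext (Matrix.single_mul_single_same _ _ _ _ _)
  rw [this, mul_one]

lemma tE22_mul_tE12 : tE22 k q * tE12 k r = 0 :=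
  Subtype.ext (Matrix.single_mul_single_of_ne _ _ _ _ (by decide) _)
lemma tE23_mul_tE22 : tE23 k q * tE22 k r = 0 :=
  Subtype.ext (Matrix.single_mul_single_of_ne _ _ _ _ (by decide) _)
lemma tE33_mul_tE12 : tE33 k * tE12 k q = 0 :=
  Subtype.ext (Matrix.single_mul_single_of_ne _ _ _ _ (by decide) _)
lemma tE33_mul_tE22 : tE33 k * tE22 k q = 0 :=
  Subtype.ext (Matrix.single_mul_single_of_ne _ _ _ _ (by decide) _)
lemma tE33_mul_tE23 : tE33 k * tE23 k q = 0 :=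
  Subtype.ext (Matrix.single_mul_single_of_ne _ _ _ _ (by decide) _)
lemma tE12_mul_tE33 : tE12 k q * tE33 k = 0 :=
  Subtype.ext (Matrix.single_mul_single_of_ne _ _ _ _ (by decide) _)
lemma tE22_mul_tE33 : tE22 k q * tE33 k = 0 :=
  Subtype.ext (Matrix.single_mul_single_of_ne _ _ _ _ (by decide) _)
lemma tE22_mul_tE11 : tE22 k q * tE11 k = 0 :=
  Subtype.ext (Matrix.single_mul_single_of_ne _ _ _ _ (by decide) _)
lemma tE11_mul_tE22 : tE11 k * tE22 k q = 0 :=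
  Subtype.ext (Matrix.single_mul_single_of_ne _ _ _ _ (by decide) _)
lemma tE11_mul_tE33 : tE11 k * tE33 k = 0 :=
  Subtype.ext (Matrix.single_mul_single_of_ne _ _ _ _ (by decide) _)
lemma tE33_mul_tE11 : tE33 k * tE11 k = 0 :=
  Subtype.ext (Matrix.single_mul_single_of_ne _ _ _ _ (by decide) _)
lemma tE11_mul_tE23 : tE11 k * tE23 k q = 0 :=
  Subtype.ext (Matrix.single_mul_single_of_ne _ _ _ _ (by decide) _)
lemma tE23_mul_tE11 : tE23 k q * tE11 k = 0 :=
  Subtype.ext (Matrix.single_mul_single_of_ne _ _ _ _ (by decide) _)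
lemma tE11_mul_tE11 : tE11 k * tE11 k = tE11 k := by
  have h : (tE11 k * tE11 k).val = Matrix.single 0 0 ((1 : Polynomial k) * 1) :=
    Matrix.single_mul_single_same _ _ _ _ _
  exact Subtype.ext (by rw [h, one_mul]; rfl)
lemma tE33_mul_tE33 : tE33 k * tE33 k = tE33 k := by
  have h : (tE33 k * tE33 k).val = Matrix.single 2 2 ((1 : Polynomial k) * 1) :=
    Matrix.single_mul_single_same _ _ _ _ _
  exact Subtype.ext (by rw [h, one_mul]; rfl)

lemma tE_sum_one : tE11 k + tE22one k + tE33 k = 1 := by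
  apply Subtype.ext
  show _ = (1 : Matrix (Fin 3) (Fin 3) (Polynomial k))
  ext i j
  fin_cases i <;> fin_cases j <;>
    simp [tE11, tE22one, tE22, tE33, Matrix.single, Matrix.one_apply]
end Tlemmas

section Peirce
variable (t : Tsub k)

lemma tE11_mul_t_mul_tE22one : tE11 k * t * tE22one k = tE12 k (t.val 0 1) := by
  apply Subtype.ext
  show (tE11 k).val * t.val * (tE22one k).val = _
  ext i j
  fin_cases i <;> fin_cases j <;>
    simp [tE11, tE22one, tE22, tE12, Matrix.mul_apply, Fin.sum_univ_three,
      Matrix.single]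

lemma tE22one_mul_t_mul_tE22one : tE22one k * t * tE22one k = tE22 k (t.val 1 1) := by
  apply Subtype.ext
  show (tE22one k).val * t.val * (tE22one k).val = _
  ext i j
  fin_cases i <;> fin_cases j <;>
    simp [tE22one, tE22, Matrix.mul_apply, Fin.sum_univ_three, Matrix.single]

lemma tE22one_mul_t_mul_tE33 : tE22one k * t * tE33 k = tE23 k (t.val 1 2) := by
  apply Subtype.ext
  show (tE22one k).val * t.val * (tE33 k).val = _
  ext i j
  fin_cases i <;> fin_cases j <;>
    simp [tE22one, tE22, tE23, tE33, Matrix.mul_apply, Fin.sum_univ_three,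
      Matrix.single]

lemma T_decomp (x z : k) (hx : t.val 0 0 = C x) (hz : t.val 2 2 = C z) :
    t = x • tE11 k + tE12 k (t.val 0 1) + tE13 k (t.val 0 2) + tE22 k (t.val 1 1)
      + tE23 k (t.val 1 2) + z • tE33 k := by
  have h10 := t.2.1 1 0 (by decide)
  have h20 := t.2.1 2 0 (by decide)
  have h21 := t.2.1 2 1 (by decide)
  apply Subtype.ext
  ext i j
  fin_cases i <;> fin_cases j <;>
    simp [tE11, tE12, tE13, tE22, tE23, tE33, Matrix.single, hx, hz,
      h10, h20, h21, Polynomial.smul_eq_C_mul]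

end Peirce

section DerGen
variable {R : Type*} [Ring R] [Algebra k R]

/-- The inner derivation attached to `a`. -/
noncomputable def innerD (a : R) : R →ₗ[k] R :=
  LinearMap.mulLeft k a - LinearMap.mulRight k a

lemma innerD_apply (a x : R) : innerD (k := k) a x = a * x - x * a := rfl

lemma isDer_innerD (a : R) : IsDer k (innerD (k := k) a) := by
  intro x y
  simp only [innerD_apply]
  noncomm_ring

lemma IsDer.sub {D D' : R →ₗ[k] R} (h : IsDer k D) (h' : IsDer k D') :
    IsDer k (D - D') := by
  intro x y
  simp only [LinearMap.sub_apply, h x y, h' x y]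
  noncomm_ring

/-- Adjusting a derivation so that it kills a complete set of orthogonal
idempotents: the value on the first one. -/
lemma der_idem {D : R →ₗ[k] R} (hD : IsDer k D) {e1 e2 e3 : R}
    (h11 : e1 * e1 = e1)
    (h12 : e1 * e2 = 0) (h21 : e2 * e1 = 0) (h13 : e1 * e3 = 0) (h31 : e3 * e1 = 0)
    (h22 : e2 * e2 = e2) (h33 : e3 * e3 = e3)
    (hsum : e1 + e2 + e3 = 1) :
    D e1 = innerD (k := k) (D e1 * e1 + D e2 * e2 + D e3 * e3) e1 := by
  rw [innerD_apply]
  have q1 : D e1 = D e1 * e1 + e1 * D e1 := by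
    have := hD e1 e1; rw [h11] at this; exact this
  have k1 : e1 * D e1 * e1 = 0 := by
    have key : e1 * D e1 * e1 = e1 * D e1 * e1 + e1 * D e1 * e1 := by
      nth_rewrite 1 [q1]
      simp only [mul_add, add_mul, ← mul_assoc]
      rw [mul_assoc (e1 * D e1) e1 e1, h11]
    exact (right_eq_add.mp key)
  have q12 : e1 * D e2 = -(D e1 * e2) := by
    have := hD e1 e2
    rw [h12, map_zero] at this
    exact (neg_eq_of_add_eq_zero_right this.symm).symm
  have q13 : e1 * D e3 = -(D e1 * e3) := by
    have := hD e1 e3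
    rw [h13, map_zero] at this
    exact (neg_eq_of_add_eq_zero_right this.symm).symm
  have ha1 : (D e1 * e1 + D e2 * e2 + D e3 * e3) * e1 = D e1 * e1 := by
    simp only [add_mul, mul_assoc, h11, h21, h31, mul_zero, add_zero]
  have ha2 : e1 * (D e1 * e1 + D e2 * e2 + D e3 * e3) = -(D e1) + D e1 * e1 := by
    have c2 : e1 * (D e2 * e2) = -(D e1 * e2) := by
      rw [← mul_assoc, q12, neg_mul, mul_assoc, h22]
    have c3 : e1 * (D e3 * e3) = -(D e1 * e3) := by
      rw [← mul_assoc, q13, neg_mul, mul_assoc, h33]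
    have c1 : e1 * (D e1 * e1) = 0 := by rw [← mul_assoc, k1]
    have he23 : e2 + e3 = 1 - e1 := by
      rw [← hsum]; abel
    calc e1 * (D e1 * e1 + D e2 * e2 + D e3 * e3)
        = e1 * (D e1 * e1) + e1 * (D e2 * e2) + e1 * (D e3 * e3) := by
          simp only [mul_add]
      _ = -(D e1 * e2) + -(D e1 * e3) := by rw [c1, c2, c3, zero_add]
      _ = -(D e1 * (e2 + e3)) := by rw [mul_add]; abel
      _ = -(D e1 * (1 - e1)) := by rw [he23]
      _ = -(D e1) + D e1 * e1 := by rw [mul_sub, mul_one]; abel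
  rw [ha1, ha2]
  abel

/-- Peirce component stability. -/
lemma der_peirce {D : R →ₗ[k] R} (hD : IsDer k D) {e f x : R}
    (he : D e = 0) (hf : D f = 0) (hex : e * x = x) (hxf : x * f = x) :
    D x = e * D x * f := by
  have h1 : D x = e * D x := by
    have := hD e x
    rw [hex, he, zero_mul, zero_add] at this
    exact this
  have h2 : D x = D x * f := by
    have := hD x f
    rw [hxf, hf, mul_zero, add_zero] at this
    exact this
  conv_rhs => rw [mul_assoc, ← h2]
  exact h1

end DerGen

section V19lemmas
variable {p : ℕ}

set_option maxHeartbeats 1000000 in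
lemma mem_V19_iff (hp : 0 < p) (q : Polynomial k) :
    q ∈ V19 k p ↔ q.coeff 2 = q.coeff 1 ∧
      ∀ j, 3 ≤ j → j < 6*p+1 → j ≠ 2*p+1 → q.coeff j = 0 := by
  constructor
  · intro hq
    rcases Submodule.mem_sup.mp hq with ⟨s, hs, b, hb, rfl⟩
    rcases Submodule.mem_span_insert.mp hs with ⟨lam, s1, hs1, rfl⟩
    rcases Submodule.mem_span_insert.mp hs1 with ⟨mu, s2, hs2, rfl⟩
    rcases Submodule.mem_span_singleton.mp hs2 with ⟨nu, rfl⟩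
    have hbc : ∀ j, j < 6*p+1 → b.coeff j = 0 := fun j hj =>
      Polynomial.X_pow_dvd_iff.mp hb j hj
    have hcoeff : ∀ j, j < 6*p+1 →
        (lam • (1 : Polynomial k) + (mu • (X + X^2) + nu • X^(2*p+1)) + b).coeff j =
        lam * (if j = 0 then 1 else 0)
          + mu * ((if 1 = j then 1 else 0) + (if j = 2 then 1 else 0))
          + nu * (if j = 2*p+1 then 1 else 0) := by
      intro j hj
      simp [Polynomial.coeff_add, Polynomial.coeff_smul, Polynomial.coeff_one,
        Polynomial.coeff_X, Polynomial.coeff_X_pow, hbc j hj, smul_eq_mul]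
      split_ifs <;> ring
    constructor
    · rw [hcoeff 1 (by omega), hcoeff 2 (by omega)]
      simp [hp.ne', show (1:ℕ) ≠ 0 from by omega, show (2:ℕ) ≠ 0 from by omega,
        show (1:ℕ) ≠ 2*p+1 from by omega, show (2:ℕ) ≠ 2*p+1 from by omega,
        show (1:ℕ) ≠ 2 from by omega]
    · intro j h3 hN hne
      rw [hcoeff j hN]
      simp [show j ≠ 0 from by omega, show (1:ℕ) ≠ j from by omega,
        show j ≠ 2 from by omega, hne]
  · rintro ⟨h12, hother⟩
    set s := q.coeff 0 • (1 : Polynomial k) + q.coeff 1 • (X + X^2)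
      + q.coeff (2*p+1) • X^(2*p+1) with hs
    have hsmem : s ∈ Submodule.span k
        {(1 : Polynomial k), X + X ^ 2, X ^ (2 * p + 1)} := by
      refine Submodule.add_mem _ (Submodule.add_mem _ ?_ ?_) ?_ <;>
        exact Submodule.smul_mem _ _ (Submodule.subset_span (by simp))
    have hrem : q - s ∈ Bsub k (6*p+1) := by
      show X^(6*p+1) ∣ q - s
      rw [Polynomial.X_pow_dvd_iff]
      intro d hd
      have hcs : ∀ j, s.coeff j =
          q.coeff 0 * (if j = 0 then 1 else 0)
          + q.coeff 1 * ((if 1 = j then 1 else 0) + (if j = 2 then 1 else 0))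
          + q.coeff (2*p+1) * (if j = 2*p+1 then 1 else 0) := by
        intro j
        simp [hs, Polynomial.coeff_add, Polynomial.coeff_smul, Polynomial.coeff_one,
          Polynomial.coeff_X, Polynomial.coeff_X_pow, smul_eq_mul]
        split_ifs <;> ring
      rw [Polynomial.coeff_sub, hcs d]
      rcases Nat.lt_or_ge d 3 with hd3 | hd3
      · interval_cases d
        · simp
        · simp [hp.ne', show (1:ℕ) ≠ 0 from by omega, show (1:ℕ) ≠ 2*p+1 from by omega,
            show (1:ℕ) ≠ 2 from by omega]
        · simp [show (2:ℕ) ≠ 0 from by omega, show (2:ℕ) ≠ 2*p+1 from by omega,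
            show (1:ℕ) ≠ 2 from by omega, h12]
      · by_cases hd2p : d = 2*p+1
        · subst hd2p
          simp [hp.ne', show 2*p+1 ≠ 0 from by omega, show (1:ℕ) ≠ 2*p+1 from by omega,
            show 2*p+1 ≠ 2 from by omega]
        · rw [hother d hd3 hd hd2p]
          simp [show d ≠ 0 from by omega, show (1:ℕ) ≠ d from by omega,
            show d ≠ 2 from by omega, hd2p]
    have : q = s + (q - s) := by ring
    rw [this]
    exact Submodule.add_mem _ (Submodule.mem_sup_left hsmem) (Submodule.mem_sup_right hrem)

end V19lemmas

/-- The key polynomial computation. -/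
lemma key_poly {p : ℕ} (hp2 : 2 ≤ p) (f h : Polynomial k) (hh0 : h.coeff 0 = 0)
    (H1 : h ∈ V19 k p)
    (H2 : (1 + C 2 * X) * f + (X + X^2) * h ∈ V19 k p)
    (H3 : X^(2*p) * f + X^(2*p+1) * h ∈ V19 k p)
    (H4 : X^(6*p) * f ∈ V19 k p) :
    X^(6*p+1) ∣ f ∧ X^(6*p+1) ∣ h := by
  have hp : 0 < p := by omega
  have expand : (1 + C 2 * X) * f + (X + X^2) * h
      = f + C 2 * (X * f) + X * h + X^2 * h := by ring
  -- coefficient formulas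
  have c2 : ∀ i, ((1 + C 2 * X) * f + (X + X^2) * h).coeff (i+2) =
      f.coeff (i+2) + 2 * f.coeff (i+1) + h.coeff (i+1) + h.coeff i := by
    intro i
    have e1 : (X * f).coeff (i+2) = f.coeff (i+1) := by
      rw [show i+2 = (i+1)+1 by omega, Polynomial.coeff_X_mul]
    have e2 : (X * h).coeff (i+2) = h.coeff (i+1) := by
      rw [show i+2 = (i+1)+1 by omega, Polynomial.coeff_X_mul]
    have e3 : (X^2 * h).coeff (i+2) = h.coeff i := Polynomial.coeff_X_pow_mul h 2 i
    rw [expand, Polynomial.coeff_add, Polynomial.coeff_add, Polynomial.coeff_add,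
      Polynomial.coeff_C_mul, e1, e2, e3]
  have c1 : ((1 + C 2 * X) * f + (X + X^2) * h).coeff 1
      = f.coeff 1 + 2 * f.coeff 0 + h.coeff 0 := by
    have e1 : (X * f).coeff 1 = f.coeff 0 := by
      rw [show (1:ℕ) = 0+1 by omega, Polynomial.coeff_X_mul]
    have e2 : (X * h).coeff 1 = h.coeff 0 := by
      rw [show (1:ℕ) = 0+1 by omega, Polynomial.coeff_X_mul]
    have e3 : (X^2 * h).coeff 1 = 0 := by
      have hX2 : X^2 * h = X * (X * h) := by ring
      rw [hX2, show (1:ℕ) = 0+1 by omega, Polynomial.coeff_X_mul,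
        Polynomial.mul_coeff_zero, Polynomial.coeff_X_zero, zero_mul]
    rw [expand, Polynomial.coeff_add, Polynomial.coeff_add, Polynomial.coeff_add,
      Polynomial.coeff_C_mul, e1, e2, e3]
    ring
  have c3 : ∀ i, (X^(2*p) * f + X^(2*p+1) * h).coeff (i+1+2*p)
      = f.coeff (i+1) + h.coeff i := by
    intro i
    have e1 : (X^(2*p) * f).coeff (i+1+2*p) = f.coeff (i+1) :=
      Polynomial.coeff_X_pow_mul f (2*p) (i+1)
    have e2 : (X^(2*p+1) * h).coeff (i+1+2*p) = h.coeff i := by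
      rw [show i+1+2*p = i+(2*p+1) by omega]
      exact Polynomial.coeff_X_pow_mul h (2*p+1) i
    rw [Polynomial.coeff_add, e1, e2]
  -- unpack the memberships
  obtain ⟨hμ2, hhj⟩ := (mem_V19_iff hp h).mp H1
  obtain ⟨e2a, s2j'⟩ := (mem_V19_iff hp _).mp H2
  obtain ⟨_, s3j⟩ := (mem_V19_iff hp _).mp H3
  obtain ⟨_, s4j⟩ := (mem_V19_iff hp _).mp H4
  -- condition (2) at interior degrees
  have s2 : ∀ i, 1 ≤ i → i+2 < 6*p+1 → i+2 ≠ 2*p+1 →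
      f.coeff (i+2) + 2 * f.coeff (i+1) + h.coeff (i+1) + h.coeff i = 0 := by
    intro i h1i hi hne
    rw [← c2 i]
    exact s2j' (i+2) (by omega) hi hne
  -- condition (3): f.coeff (i+1) = - h.coeff i  for 1 ≤ i, i+1 ≤ 4p
  have hF : ∀ i, 1 ≤ i → i+1 ≤ 4*p → f.coeff (i+1) = -h.coeff i := by
    intro i h1 h4
    have hj1 : 3 ≤ i+1+2*p := by omega
    have hj2 : i+1+2*p < 6*p+1 := by omega
    have hj3 : i+1+2*p ≠ 2*p+1 := by omega
    have hz := s3j (i+1+2*p) hj1 hj2 hj3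
    rw [c3 i] at hz
    linear_combination hz
  -- condition (4): f.coeff 0 = 0
  have F0 : f.coeff 0 = 0 := by
    have := s4j (6*p) (by omega) (by omega) (by omega)
    have e : (X^(6*p) * f).coeff (6*p) = f.coeff 0 := by
      simpa using Polynomial.coeff_X_pow_mul f (6*p) 0
    rw [e] at this
    exact this
  -- the eq-a condition: coeff 2 = coeff 1
  have eqa : f.coeff 2 + 2 * f.coeff 1 + h.coeff 1 + h.coeff 0
      = f.coeff 1 + 2 * f.coeff 0 + h.coeff 0 := by
    have c20 := c2 0
    simp only [Nat.zero_add] at c20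
    rw [c20, c1] at e2a
    exact e2a
  have F2 : f.coeff 2 = -h.coeff 1 := by
    have := hF 1 (by omega) (by omega); simpa using this
  have F1 : f.coeff 1 = 0 := by
    have := eqa
    rw [F2, F0, hh0] at this
    linear_combination this
  have mu0 : h.coeff 1 = 0 := by
    have h3 := s2 1 (by omega) (by omega) (by omega)
    have F3 : f.coeff 3 = -h.coeff 2 := by
      have := hF 2 (by omega) (by omega); simpa using this
    rw [show (1:ℕ)+2 = 3 by omega, show (1:ℕ)+1 = 2 by omega] at h3
    rw [F3, F2, hμ2] at h3
    linear_combination -h3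
  have h2c : h.coeff 2 = 0 := by rw [hμ2, mu0]
  have nu0 : h.coeff (2*p+1) = 0 := by
    have hstep := s2 (2*p+1) (by omega) (by omega) (by omega)
    have Fa : f.coeff (2*p+1+2) = -h.coeff (2*p+2) := by
      have := hF (2*p+2) (by omega) (by omega)
      rw [show 2*p+2+1 = 2*p+1+2 by omega] at this
      exact this
    have Fb : f.coeff (2*p+1+1) = -h.coeff (2*p+1) := hF (2*p+1) (by omega) (by omega)
    have Hc : h.coeff (2*p+2) = 0 := hhj (2*p+2) (by omega) (by omega) (by omega)
    rw [Fa, Fb, show 2*p+1+1 = 2*p+2 by omega, Hc] at hstep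
    linear_combination -hstep
  -- all low coefficients of h vanish
  have hH : ∀ j, j < 6*p+1 → h.coeff j = 0 := by
    intro j hj
    rcases Nat.lt_or_ge j 3 with hj3 | hj3
    · interval_cases j
      · exact hh0
      · exact mu0
      · exact h2c
    · by_cases hje : j = 2*p+1
      · rw [hje]; exact nu0
      · exact hhj j hj3 hj hje
  -- all low coefficients of f vanish, by strong induction
  have hFF : ∀ j, j < 6*p+1 → f.coeff j = 0 := by
    intro j
    induction j using Nat.strong_induction_on with
    | _ j ih =>
      intro hj
      rcases Nat.lt_or_ge j 2 with hj2 | hj2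
      · interval_cases j
        · exact F0
        · exact F1
      · rcases le_or_gt j (4*p+1) with hj4 | hj4
        · -- 2 ≤ j ≤ 4p+1 : j = i+1 with 1 ≤ i, i+1 ≤ 4p... careful j could be 4p+1
          rcases le_or_gt j (4*p) with hj4' | hj4'
          · have := hF (j-1) (by omega) (by omega)
            rw [show j-1+1 = j by omega] at this
            rw [this, hH (j-1) (by omega), neg_zero]
          · -- j = 4p+1 : use s2
            have hstep := s2 (j-2) (by omega) (by omega) (by omega)
            rw [show j-2+2 = j by omega, show j-2+1 = j-1 by omega] at hstep
            rw [ih (j-1) (by omega) (by omega), hH (j-1) (by omega),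
              hH (j-2) (by omega)] at hstep
            linear_combination hstep
        · -- 4p+1 < j ≤ 6p
          have hstep := s2 (j-2) (by omega) (by omega) (by omega)
          rw [show j-2+2 = j by omega, show j-2+1 = j-1 by omega] at hstep
          rw [ih (j-1) (by omega) (by omega), hH (j-1) (by omega),
            hH (j-2) (by omega)] at hstep
          linear_combination hstep
  exact ⟨Polynomial.X_pow_dvd_iff.mpr hFF, Polynomial.X_pow_dvd_iff.mpr hH⟩


section Main
variable {p : ℕ}

lemma D_tE22_formula (D : AA k p →ₗ[k] AA k p) (hD : IsDer k D) (f : Polynomial k)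
    (hf : D (pr k p (tE22 k X)) = pr k p (tE22 k f))
    (hE2 : D (pr k p (tE22 k 1)) = 0) (g : Polynomial k) :
    D (pr k p (tE22 k g)) = pr k p (tE22 k (derivative g * f)) := by
  have hpow : ∀ n : ℕ, D (pr k p (tE22 k (X^n)))
      = pr k p (tE22 k (derivative (X^n : Polynomial k) * f)) := by
    intro n
    induction n with
    | zero =>
      simp only [pow_zero, derivative_one, zero_mul, tE22_zero, map_zero]
      exact hE2
    | succ n ih =>
      have hmul : tE22 k (X^(n+1) : Polynomial k) = tE22 k (X^n) * tE22 k X := by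
        rw [tE22_mul_tE22, ← pow_succ]
      have hq : derivative (X^n : Polynomial k) * f * X + X^n * f
          = derivative (X^(n+1) : Polynomial k) * f := by
        rw [pow_succ, derivative_mul, derivative_X, mul_one]
        ring
      rw [hmul, (pr k p).map_mul, hD, ih, hf, ← (pr k p).map_mul, ← (pr k p).map_mul,
        tE22_mul_tE22, tE22_mul_tE22, ← (pr k p).map_add, ← tE22_add, hq]
  induction g using Polynomial.induction_on' with
  | add q r hq hr =>
    rw [tE22_add, (pr k p).map_add, map_add, hq, hr, ← (pr k p).map_add, ← tE22_add,
      ← add_mul, ← derivative_add]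
  | monomial n a =>
    have hmono : (Polynomial.monomial n a : Polynomial k) = a • X^n := by
      rw [← Polynomial.C_mul_X_pow_eq_monomial, ← Polynomial.smul_eq_C_mul]
    rw [hmono, tE22_smul, pr_smul, _root_.map_smul, hpow n, derivative_smul,
      smul_mul_assoc, tE22_smul, pr_smul]

end Main

section Assembly
variable {p : ℕ}

set_option maxHeartbeats 1000000 in
lemma main_inner [CharP k p] (hp : 0 < p)
    (D : AA k p →ₗ[k] AA k p) (hD : IsDer k D) : IsInner k D := by
  haveI : NeZero p := ⟨hp.ne'⟩
  have hp2 : 2 ≤ p := (CharP.char_is_prime_of_pos k p).out.two_le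
  -- idempotents
  have hE11 : pr k p (tE11 k) * pr k p (tE11 k) = pr k p (tE11 k) := by
    rw [← (pr k p).map_mul, tE11_mul_tE11]
  have hE22 : pr k p (tE22 k 1) * pr k p (tE22 k 1) = pr k p (tE22 k 1) := by
    rw [← (pr k p).map_mul, tE22_mul_tE22, one_mul]
  have hE33 : pr k p (tE33 k) * pr k p (tE33 k) = pr k p (tE33 k) := by
    rw [← (pr k p).map_mul, tE33_mul_tE33]
  have hE12o : pr k p (tE11 k) * pr k p (tE22 k 1) = 0 := by
    rw [← (pr k p).map_mul, tE11_mul_tE22, map_zero]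
  have hE21o : pr k p (tE22 k 1) * pr k p (tE11 k) = 0 := by
    rw [← (pr k p).map_mul, tE22_mul_tE11, map_zero]
  have hE13o : pr k p (tE11 k) * pr k p (tE33 k) = 0 := by
    rw [← (pr k p).map_mul, tE11_mul_tE33, map_zero]
  have hE31o : pr k p (tE33 k) * pr k p (tE11 k) = 0 := by
    rw [← (pr k p).map_mul, tE33_mul_tE11, map_zero]
  have hE23o : pr k p (tE22 k 1) * pr k p (tE33 k) = 0 := by
    rw [← (pr k p).map_mul, tE22_mul_tE33, map_zero]
  have hE32o : pr k p (tE33 k) * pr k p (tE22 k 1) = 0 := by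
    rw [← (pr k p).map_mul, tE33_mul_tE22, map_zero]
  have hsum : pr k p (tE11 k) + pr k p (tE22 k 1) + pr k p (tE33 k) = 1 := by
    have h1 : tE11 k + tE22one k + tE33 k = 1 := tE_sum_one
    calc pr k p (tE11 k) + pr k p (tE22 k 1) + pr k p (tE33 k)
        = pr k p (tE11 k + tE22one k + tE33 k) := by
          rw [(pr k p).map_add, (pr k p).map_add]; rfl
      _ = 1 := by rw [h1, (pr k p).map_one]
  -- first inner adjustment
  set a1 := D (pr k p (tE11 k)) * pr k p (tE11 k)
    + D (pr k p (tE22 k 1)) * pr k p (tE22 k 1)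
    + D (pr k p (tE33 k)) * pr k p (tE33 k) with ha1
  set D1 := D - innerD (k := k) a1 with hD1def
  have hD1 : IsDer k D1 := IsDer.sub hD (isDer_innerD a1)
  have hD1E1 : D1 (pr k p (tE11 k)) = 0 := by
    have h := der_idem (k := k) hD hE11 hE12o hE21o hE13o hE31o hE22 hE33 hsum
    rw [hD1def]
    simp only [LinearMap.sub_apply]
    rw [h]
    exact sub_self _
  have hD1E2 : D1 (pr k p (tE22 k 1)) = 0 := by
    have h := der_idem (k := k) hD hE22 hE21o hE12o hE23o hE32o hE11 hE33
      (by rw [← hsum]; abel)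
    have e : D (pr k p (tE22 k 1)) * pr k p (tE22 k 1)
        + D (pr k p (tE11 k)) * pr k p (tE11 k)
        + D (pr k p (tE33 k)) * pr k p (tE33 k) = a1 := by rw [ha1]; abel
    rw [e] at h
    rw [hD1def]
    simp only [LinearMap.sub_apply]
    rw [h]
    exact sub_self _
  have hD1E3 : D1 (pr k p (tE33 k)) = 0 := by
    have h := der_idem (k := k) hD hE33 hE32o hE23o hE31o hE13o hE22 hE11
      (by rw [← hsum]; abel)
    have e : D (pr k p (tE33 k)) * pr k p (tE33 k)
        + D (pr k p (tE22 k 1)) * pr k p (tE22 k 1)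
        + D (pr k p (tE11 k)) * pr k p (tE11 k) = a1 := by rw [ha1]; abel
    rw [e] at h
    rw [hD1def]
    simp only [LinearMap.sub_apply]
    rw [h]
    exact sub_self _
  -- lifts of the values of D1 on the generators
  obtain ⟨ta, hta⟩ := pr_surj (k := k) (p := p) (D1 (pr k p (tE12 k 1)))
  obtain ⟨tb, htb⟩ := pr_surj (k := k) (p := p) (D1 (pr k p (tE22 k X)))
  obtain ⟨tc, htc⟩ := pr_surj (k := k) (p := p) (D1 (pr k p (tE23 k 1)))
  set a : Polynomial k := ta.val 0 1 with hadef
  set f : Polynomial k := tb.val 1 1 with hfdef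
  set c : Polynomial k := tc.val 1 2 with hcdef
  have hDal : D1 (pr k p (tE12 k 1)) = pr k p (tE12 k a) := by
    have hl : pr k p (tE11 k) * pr k p (tE12 k 1) = pr k p (tE12 k 1) := by
      rw [← (pr k p).map_mul, tE11_mul_tE12]
    have hr : pr k p (tE12 k 1) * pr k p (tE22 k 1) = pr k p (tE12 k 1) := by
      rw [← (pr k p).map_mul, tE12_mul_tE22, one_mul]
    have hpe := der_peirce hD1 hD1E1 hD1E2 hl hr
    rw [hpe, ← hta, ← (pr k p).map_mul, ← (pr k p).map_mul]
    exact congrArg _ (tE11_mul_t_mul_tE22one ta)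
  have hDbb : D1 (pr k p (tE22 k X)) = pr k p (tE22 k f) := by
    have hl : pr k p (tE22 k 1) * pr k p (tE22 k X) = pr k p (tE22 k X) := by
      rw [← (pr k p).map_mul, tE22_mul_tE22, one_mul]
    have hr : pr k p (tE22 k X) * pr k p (tE22 k 1) = pr k p (tE22 k X) := by
      rw [← (pr k p).map_mul, tE22_mul_tE22, mul_one]
    have hpe := der_peirce hD1 hD1E2 hD1E2 hl hr
    rw [hpe, ← htb, ← (pr k p).map_mul, ← (pr k p).map_mul]
    exact congrArg _ (tE22one_mul_t_mul_tE22one tb)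
  have hDga : D1 (pr k p (tE23 k 1)) = pr k p (tE23 k c) := by
    have hl : pr k p (tE22 k 1) * pr k p (tE23 k 1) = pr k p (tE23 k 1) := by
      rw [← (pr k p).map_mul, tE22_mul_tE23, one_mul]
    have hr : pr k p (tE23 k 1) * pr k p (tE33 k) = pr k p (tE23 k 1) := by
      rw [← (pr k p).map_mul, tE23_mul_tE33]
    have hpe := der_peirce hD1 hD1E2 hD1E3 hl hr
    rw [hpe, ← htc, ← (pr k p).map_mul, ← (pr k p).map_mul]
    exact congrArg _ (tE22one_mul_t_mul_tE33 tc)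
  -- second inner adjustment
  set z : k := -((c + a).coeff 0) with hz
  set m2 := pr k p (tE22 k (-a)) + z • pr k p (tE33 k) with hm2
  set D2 := D1 - innerD (k := k) m2 with hD2def
  have hD2 : IsDer k D2 := IsDer.sub hD1 (isDer_innerD m2)
  set hh : Polynomial k := c + a + C z with hhdef
  have hh0 : hh.coeff 0 = 0 := by
    rw [hhdef]
    simp only [Polynomial.coeff_add, Polynomial.coeff_C]
    rw [hz]
    simp
  -- innerD m2 values on idempotents
  have hmE1 : m2 * pr k p (tE11 k) = 0 := by
    rw [hm2, add_mul, smul_mul_assoc, ← (pr k p).map_mul, ← (pr k p).map_mul,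
      tE22_mul_tE11, tE33_mul_tE11, map_zero, smul_zero, add_zero]
  have hE1m : pr k p (tE11 k) * m2 = 0 := by
    rw [hm2, mul_add, mul_smul_comm, ← (pr k p).map_mul, ← (pr k p).map_mul,
      tE11_mul_tE22, tE11_mul_tE33, map_zero, smul_zero, add_zero]
  have hmE2 : m2 * pr k p (tE22 k 1) = pr k p (tE22 k (-a)) := by
    rw [hm2, add_mul, smul_mul_assoc, ← (pr k p).map_mul, ← (pr k p).map_mul,
      tE22_mul_tE22, tE33_mul_tE22, mul_one, map_zero, smul_zero, add_zero]
  have hE2m : pr k p (tE22 k 1) * m2 = pr k p (tE22 k (-a)) := by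
    rw [hm2, mul_add, mul_smul_comm, ← (pr k p).map_mul, ← (pr k p).map_mul,
      tE22_mul_tE22, tE22_mul_tE33, one_mul, map_zero, smul_zero, add_zero]
  have hmE3 : m2 * pr k p (tE33 k) = z • pr k p (tE33 k) := by
    rw [hm2, add_mul, smul_mul_assoc, ← (pr k p).map_mul, ← (pr k p).map_mul,
      tE22_mul_tE33, tE33_mul_tE33, map_zero, zero_add]
  have hE3m : pr k p (tE33 k) * m2 = z • pr k p (tE33 k) := by
    rw [hm2, mul_add, mul_smul_comm, ← (pr k p).map_mul, ← (pr k p).map_mul,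
      tE33_mul_tE22, tE33_mul_tE33, map_zero, zero_add]
  have hD2E1 : D2 (pr k p (tE11 k)) = 0 := by
    rw [hD2def]
    simp only [LinearMap.sub_apply, hD1E1, innerD_apply, hmE1, hE1m]
    simp
  have hD2E2 : D2 (pr k p (tE22 k 1)) = 0 := by
    rw [hD2def]
    simp only [LinearMap.sub_apply, hD1E2, innerD_apply, hmE2, hE2m]
    simp
  have hD2E3 : D2 (pr k p (tE33 k)) = 0 := by
    rw [hD2def]
    simp only [LinearMap.sub_apply, hD1E3, innerD_apply, hmE3, hE3m]
    simp
  -- D2 on the arrows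
  have hD2al : D2 (pr k p (tE12 k 1)) = 0 := by
    have hma : m2 * pr k p (tE12 k 1) = 0 := by
      rw [hm2, add_mul, smul_mul_assoc, ← (pr k p).map_mul, ← (pr k p).map_mul,
        tE22_mul_tE12, tE33_mul_tE12, map_zero, smul_zero, add_zero]
    have ham : pr k p (tE12 k 1) * m2 = pr k p (tE12 k (-a)) := by
      rw [hm2, mul_add, mul_smul_comm, ← (pr k p).map_mul, ← (pr k p).map_mul,
        tE12_mul_tE22, tE12_mul_tE33, one_mul, map_zero, smul_zero, add_zero]
    rw [hD2def]
    simp only [LinearMap.sub_apply, innerD_apply, hDal, hma, ham]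
    rw [tE12_neg, (pr k p).map_neg]
    abel
  have hD2bb2 : D2 (pr k p (tE22 k X)) = pr k p (tE22 k f) := by
    have hmb : m2 * pr k p (tE22 k X) = pr k p (tE22 k (-a * X)) := by
      rw [hm2, add_mul, smul_mul_assoc, ← (pr k p).map_mul, ← (pr k p).map_mul,
        tE22_mul_tE22, tE33_mul_tE22, map_zero, smul_zero, add_zero]
    have hbm : pr k p (tE22 k X) * m2 = pr k p (tE22 k (-a * X)) := by
      rw [hm2, mul_add, mul_smul_comm, ← (pr k p).map_mul, ← (pr k p).map_mul,
        tE22_mul_tE22, tE22_mul_tE33, map_zero, smul_zero, add_zero,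
        mul_comm X (-a)]
    rw [hD2def]
    simp only [LinearMap.sub_apply, innerD_apply, hDbb, hmb, hbm, sub_self, sub_zero]
  have hD2ga : D2 (pr k p (tE23 k 1)) = pr k p (tE23 k hh) := by
    have hmg : m2 * pr k p (tE23 k 1) = pr k p (tE23 k (-a)) := by
      rw [hm2, add_mul, smul_mul_assoc, ← (pr k p).map_mul, ← (pr k p).map_mul,
        tE22_mul_tE23, tE33_mul_tE23, mul_one, map_zero, smul_zero, add_zero]
    have hgm : pr k p (tE23 k 1) * m2 = pr k p (tE23 k (C z)) := by
      rw [hm2, mul_add, mul_smul_comm, ← (pr k p).map_mul, ← (pr k p).map_mul,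
        tE23_mul_tE22, tE23_mul_tE33, map_zero, zero_add, ← pr_smul, ← tE23_smul,
        Polynomial.smul_eq_C_mul, mul_one]
    rw [hD2def]
    simp only [LinearMap.sub_apply, innerD_apply, hDga, hmg, hgm]
    rw [hhdef, tE23_add, tE23_add, (pr k p).map_add, (pr k p).map_add, tE23_neg,
      (pr k p).map_neg]
    abel
  -- the derivative formula for D2
  have hDg : ∀ g : Polynomial k,
      D2 (pr k p (tE22 k g)) = pr k p (tE22 k (derivative g * f)) :=
    fun g => D_tE22_formula D2 hD2 f hD2bb2 hD2E2 g
  -- constraints from the (1,3)-entries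
  have h13 : ∀ g : Polynomial k, pr k p (tE13 k g)
      = pr k p (tE12 k 1) * pr k p (tE22 k g) * pr k p (tE23 k 1) := by
    intro g
    rw [← (pr k p).map_mul, ← (pr k p).map_mul, tE12_mul_tE22, one_mul,
      tE12_mul_tE23, mul_one]
  have hcon : ∀ g : Polynomial k, g ∈ V19 k p → derivative g * f + g * hh ∈ V19 k p := by
    intro g hg
    have h0 : pr k p (tE13 k g) = 0 := (pr_tE13_eq_zero g).mpr hg
    have hDtriple : D2 (pr k p (tE12 k 1) * pr k p (tE22 k g) * pr k p (tE23 k 1))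
        = pr k p (tE13 k (derivative g * f + g * hh)) := by
      rw [hD2 (pr k p (tE12 k 1) * pr k p (tE22 k g)) (pr k p (tE23 k 1)),
        hD2 (pr k p (tE12 k 1)) (pr k p (tE22 k g)), hD2al, hDg g, hD2ga]
      rw [zero_mul, zero_add]
      simp only [← (pr k p).map_mul, tE12_mul_tE22, one_mul, tE12_mul_tE23,
        mul_one, ← (pr k p).map_add, ← tE13_add]
    have hzero : pr k p (tE13 k (derivative g * f + g * hh)) = 0 := by
      rw [← hDtriple, ← h13, h0, map_zero]
    exact (pr_tE13_eq_zero _).mp hzero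
  -- the four instances of the constraint
  have hg1 : (1 : Polynomial k) ∈ V19 k p :=
    Submodule.mem_sup_left (Submodule.subset_span (by simp))
  have H1 : hh ∈ V19 k p := by simpa using hcon 1 hg1
  have hg2 : (X + X^2 : Polynomial k) ∈ V19 k p :=
    Submodule.mem_sup_left (Submodule.subset_span (by simp))
  have hder2 : derivative (X + X^2 : Polynomial k) = 1 + C 2 * X := by
    rw [derivative_add, derivative_X, derivative_X_pow]
    norm_num
  have H2 : (1 + C 2 * X) * f + (X + X^2) * hh ∈ V19 k p := by
    have hx := hcon (X + X^2) hg2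
    rwa [hder2] at hx
  have hcast1 : ((2*p+1 : ℕ) : k) = 1 := by
    push_cast [CharP.cast_eq_zero k p]
    ring
  have hg3 : (X^(2*p+1) : Polynomial k) ∈ V19 k p :=
    Submodule.mem_sup_left (Submodule.subset_span (by simp))
  have hder3 : derivative (X^(2*p+1) : Polynomial k) = X^(2*p) := by
    rw [derivative_X_pow, hcast1, _root_.map_one, one_mul, Nat.add_sub_cancel]
  have H3 : X^(2*p) * f + X^(2*p+1) * hh ∈ V19 k p := by
    have hx := hcon (X^(2*p+1)) hg3
    rwa [hder3] at hx
  have hcast2 : ((6*p+1 : ℕ) : k) = 1 := by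
    push_cast [CharP.cast_eq_zero k p]
    ring
  have hg4 : (X^(6*p+1) : Polynomial k) ∈ V19 k p := Submodule.mem_sup_right dvd_rfl
  have hder4 : derivative (X^(6*p+1) : Polynomial k) = X^(6*p) := by
    rw [derivative_X_pow, hcast2, _root_.map_one, one_mul, Nat.add_sub_cancel]
  have H4 : X^(6*p) * f ∈ V19 k p := by
    have h4' := hcon (X^(6*p+1)) hg4
    rw [hder4] at h4'
    have hmem : (X^(6*p+1) * hh : Polynomial k) ∈ V19 k p :=
      Submodule.mem_sup_right (dvd_mul_right _ _)
    have hsub := Submodule.sub_mem _ h4' hmem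
    simpa using hsub
  obtain ⟨hfd, hhd⟩ := key_poly hp2 f hh hh0 H1 H2 H3 H4
  -- D2 vanishes everywhere
  have hD2ga0 : D2 (pr k p (tE23 k 1)) = 0 := by
    rw [hD2ga]
    exact (pr_tE23_eq_zero hh).mpr hhd
  have h22z : ∀ q : Polynomial k, D2 (pr k p (tE22 k q)) = 0 := by
    intro q
    rw [hDg q]
    exact (pr_tE22_eq_zero _).mpr (hfd.mul_left _)
  have h12z : ∀ q : Polynomial k, D2 (pr k p (tE12 k q)) = 0 := by
    intro q
    have e : tE12 k q = tE12 k 1 * tE22 k q := by rw [tE12_mul_tE22, one_mul]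
    rw [e, (pr k p).map_mul, hD2 _ _, hD2al, zero_mul, zero_add, hDg q,
      ← (pr k p).map_mul, tE12_mul_tE22, one_mul]
    exact (pr_tE12_eq_zero _).mpr (hfd.mul_left _)
  have h23z : ∀ q : Polynomial k, D2 (pr k p (tE23 k q)) = 0 := by
    intro q
    have e : tE23 k q = tE22 k q * tE23 k 1 := by rw [tE22_mul_tE23, mul_one]
    rw [e, (pr k p).map_mul, hD2 _ _, h22z q, zero_mul, zero_add, hD2ga0, mul_zero]
  have h13z : ∀ q : Polynomial k, D2 (pr k p (tE13 k q)) = 0 := by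
    intro q
    have e : tE13 k q = tE12 k 1 * tE23 k q := by rw [tE12_mul_tE23, one_mul]
    rw [e, (pr k p).map_mul, hD2 _ _, hD2al, zero_mul, zero_add, h23z q, mul_zero]
  have hall : ∀ x : AA k p, D2 x = 0 := by
    intro x
    obtain ⟨t, rfl⟩ := pr_surj (k := k) (p := p) x
    obtain ⟨xc, hxc⟩ := Tsub_00 t
    obtain ⟨zc, hzc⟩ := Tsub_22 t
    rw [T_decomp t xc zc hxc hzc, (pr k p).map_add, (pr k p).map_add,
      (pr k p).map_add, (pr k p).map_add, (pr k p).map_add, pr_smul, pr_smul]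
    simp only [map_add, LinearMap.map_smul]
    rw [hD2E1, hD2E3, h12z, h13z, h22z, h23z]
    simp
  -- conclusion
  refine ⟨a1 + m2, fun x => ?_⟩
  have h0 := hall x
  rw [hD2def, hD1def] at h0
  simp only [LinearMap.sub_apply, innerD_apply] at h0
  rw [sub_sub] at h0
  have hfin := sub_eq_zero.mp h0
  rw [hfin]
  noncomm_ring


end Assembly
end Stmt19

/-- in characteristic `p > 0`, every derivation of
`A = T/I(6p+1; 6p+1, 6p+1; span{1, β+β², β^{2p+1}} + (β^{6p+1}))` is inner. -/
theorem stmt19 (p : ℕ) [CharP k p] (hp : 0 < p) :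
    ∀ D : Aquot k (6 * p + 1) (6 * p + 1) (6 * p + 1) (V19 k p) le_rfl le_rfl (hV19 k p) →ₗ[k]
        Aquot k (6 * p + 1) (6 * p + 1) (6 * p + 1) (V19 k p) le_rfl le_rfl (hV19 k p),
      IsDer k D → IsInner k D := by
  intro D hD
  exact Stmt19.main_inner hp D hD

end
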